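/- arXiv:1808.07054 — 3 statements merged into one kernel-verified Lean document; each statement's English description precedes it below -/
import Mathlib

section
/- Let F be a field, let d ≥ 1, and let z : Fin d → F be pairwise distinct elements. Then for every integer n ≥ 1, ∑_{ℓ ∈ Fin d} z_ℓ^n · ∏_{m ≠ ℓ} z_m · (z_m − z_ℓ)⁻¹ = (−1)^{d+1} · h_{n−d}(z_1, …, z_d) · ∏_{m ∈ Fin d} z_m, where h_j(z_1, …, z_d) denotes the complete homogeneous symmetric polynomial of degree j evaluated at z_1, …, z_d (i.e. h_j(z) = ∑_{k : Fin d → ℕ, ∑ k = j} ∏_i z_i^{k_i}), with the convention that h_j = 0 for j < 0 and h_0 = 1. -/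
open Finset

/-- The complete homogeneous symmetric polynomial of degree `j` evaluated at
`z : Fin d → F`, with the convention that it vanishes for `j < 0` and equals `1`
for `j = 0`. -/
noncomputable def completeHomogeneous {F : Type*} [Field F] {d : ℕ} (z : Fin d → F) (j : ℤ) : F :=
  if j < 0 then 0
  else ∑ k ∈ Finset.Nat.antidiagonalTuple d j.toNat, ∏ i, z i ^ k i

namespace SLWaux

open Polynomial

variable {F : Type*} [Field F]

/-- complete homogeneous with ℕ index -/
noncomputable def hh {d : ℕ} (z : Fin d → F) (j : ℕ) : F :=
  ∑ k ∈ Finset.Nat.antidiagonalTuple d j, ∏ i, z i ^ k i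

lemma hh_zero {d : ℕ} (z : Fin d → F) : hh z 0 = 1 := by
  rw [hh, Finset.Nat.antidiagonalTuple_zero_right, Finset.sum_singleton]
  simp

lemma hh_succ {d : ℕ} (z : Fin (d + 1) → F) (k : ℕ) :
    hh z (k + 1) = z 0 * hh z k + hh (fun i => z i.succ) (k + 1) := by
  classical
  rw [hh, ← Finset.sum_filter_add_sum_filter_not (Finset.Nat.antidiagonalTuple (d+1) (k+1))
      (fun K => K 0 = 0), add_comm]
  congr 1
  · -- K 0 ≠ 0 part
    rw [hh, Finset.mul_sum]
    refine Finset.sum_nbij' (fun K => Fin.cons (K 0 - 1) (K ∘ Fin.succ))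
      (fun K => Fin.cons (K 0 + 1) (K ∘ Fin.succ)) ?_ ?_ ?_ ?_ ?_
    · intro K hK
      simp only [Finset.mem_filter, Finset.Nat.mem_antidiagonalTuple] at hK
      obtain ⟨h1, h2⟩ := hK
      rw [Fin.sum_univ_succ] at h1
      simp only [Finset.Nat.mem_antidiagonalTuple]
      rw [Fin.sum_univ_succ]
      simp only [Fin.cons_zero, Fin.cons_succ, Function.comp_apply]
      omega
    · intro K hK
      simp only [Finset.Nat.mem_antidiagonalTuple] at hK
      rw [Fin.sum_univ_succ] at hK
      simp only [Finset.mem_filter, Finset.Nat.mem_antidiagonalTuple]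
      rw [Fin.sum_univ_succ]
      simp only [Fin.cons_zero, Fin.cons_succ, Function.comp_apply]
      omega
    · intro K hK
      simp only [Finset.mem_filter, Finset.Nat.mem_antidiagonalTuple] at hK
      funext i
      refine Fin.cases ?_ (fun j => ?_) i
      · simp only [Fin.cons_zero, Function.comp_apply]
        omega
      · simp [Fin.cons_succ]
    · intro K _
      funext i
      refine Fin.cases ?_ (fun j => ?_) i
      · simp only [Fin.cons_zero, Function.comp_apply]
        omega
      · simp [Fin.cons_succ]
    · intro K hK
      simp only [Finset.mem_filter, Finset.Nat.mem_antidiagonalTuple] at hK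
      rw [Fin.prod_univ_succ, Fin.prod_univ_succ]
      simp only [Fin.cons_zero, Fin.cons_succ, Function.comp_apply]
      rw [← mul_assoc, ← pow_succ']
      congr 2
      omega
  · -- K 0 = 0 part
    rw [hh]
    refine Finset.sum_nbij' (fun K => K ∘ Fin.succ) (fun K => Fin.cons 0 K) ?_ ?_ ?_ ?_ ?_
    · intro K hK
      simp only [Finset.mem_filter, Finset.Nat.mem_antidiagonalTuple] at hK
      obtain ⟨h1, h2⟩ := hK
      rw [Fin.sum_univ_succ] at h1
      simp only [Finset.Nat.mem_antidiagonalTuple]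
      simp only [Function.comp_apply]
      omega
    · intro K hK
      simp only [Finset.Nat.mem_antidiagonalTuple] at hK
      simp only [Finset.mem_filter, Finset.Nat.mem_antidiagonalTuple]
      rw [Fin.sum_univ_succ]
      simp only [Fin.cons_zero, Fin.cons_succ]
      simp [hK]
    · intro K hK
      simp only [Finset.mem_filter] at hK
      funext i
      refine Fin.cases ?_ (fun j => ?_) i
      · simp [Fin.cons_zero, hK.2]
      · simp [Fin.cons_succ]
    · intro K _
      funext i
      simp [Fin.cons_succ]
    · intro K hK
      simp only [Finset.mem_filter] at hK
      rw [Fin.prod_univ_succ, hK.2, pow_zero, one_mul]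
      rfl

lemma coe_geom_prod_mul_mk_hh : ∀ (d : ℕ) (z : Fin d → F),
    ((∏ i, (1 - Polynomial.C (z i) * Polynomial.X) : F[X]) : PowerSeries F)
      * PowerSeries.mk (hh z) = 1 := by
  intro d
  induction d with
  | zero =>
    intro z
    rw [Fin.prod_univ_zero, Polynomial.coe_one, one_mul]
    ext k
    rcases k with _ | k
    · simp [hh_zero]
    · simp [hh, Finset.Nat.antidiagonalTuple_zero_succ]
  | succ d ih =>
    intro z
    have key : ((1 : PowerSeries F) - PowerSeries.C (z 0) * PowerSeries.X)
        * PowerSeries.mk (hh z) = PowerSeries.mk (hh (fun i => z i.succ)) := by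
      ext k
      rw [sub_mul, one_mul, map_sub, mul_assoc, PowerSeries.coeff_C_mul]
      rcases k with _ | k
      · simp [PowerSeries.coeff_zero_X_mul, hh_zero]
      · rw [PowerSeries.coeff_succ_X_mul]
        simp only [PowerSeries.coeff_mk]
        rw [hh_succ]
        ring
    rw [Fin.prod_univ_succ, Polynomial.coe_mul, mul_comm ((1 - Polynomial.C (z 0) * Polynomial.X : F[X]) : PowerSeries F),
      mul_assoc]
    have : ((1 - Polynomial.C (z 0) * Polynomial.X : F[X]) : PowerSeries F)
        = 1 - PowerSeries.C (z 0) * PowerSeries.X := by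
      rw [Polynomial.coe_sub, Polynomial.coe_one, Polynomial.coe_mul, Polynomial.coe_C,
        Polynomial.coe_X]
    rw [this, key]
    exact ih (fun i => z i.succ)

lemma reverse_prod {ι : Type*} (s : Finset ι) (f : ι → F[X]) :
    (∏ i ∈ s, f i).reverse = ∏ i ∈ s, (f i).reverse := by
  classical
  induction s using Finset.induction_on with
  | empty => rw [Finset.prod_empty, Finset.prod_empty, ← Polynomial.C_1, Polynomial.reverse_C]
  | insert _ _ h ih =>
    rw [Finset.prod_insert h, Finset.prod_insert h, Polynomial.reverse_mul_of_domain, ih]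

lemma reverse_X_sub_C {a : F} (ha : a ≠ 0) :
    (Polynomial.X - Polynomial.C a).reverse = 1 - Polynomial.C a * Polynomial.X := by
  have hd : (Polynomial.X - Polynomial.C a).natDegree = 1 := Polynomial.natDegree_X_sub_C a
  rw [Polynomial.reverse, hd]
  ext k
  rw [Polynomial.coeff_reflect]
  rcases k with _ | _ | k
  · rw [Polynomial.revAt_le (by norm_num)]
    simp
  · rw [Polynomial.revAt_le (by norm_num)]
    simp [Polynomial.coeff_one]
  · rw [Polynomial.revAt_eq_self_of_lt (by omega)]
    simp [Polynomial.coeff_one, Polynomial.coeff_C, Polynomial.coeff_X]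

lemma reflect_reflect (N : ℕ) (p : F[X]) : (p.reflect N).reflect N = p := by
  ext k
  rw [Polynomial.coeff_reflect, Polynomial.coeff_reflect, Polynomial.revAt_invol]

end SLWaux

open Polynomial SLWaux in
theorem sum_lagrange_weights_pow_eq_completeHomogeneous
    {F : Type*} [Field F] {d : ℕ} (hd : 1 ≤ d) (z : Fin d → F)
    (hz : Function.Injective z) (n : ℕ) (hn : 1 ≤ n) :
    ∑ ℓ, z ℓ ^ n * ∏ m ∈ Finset.univ.erase ℓ, z m * (z m - z ℓ)⁻¹
      = (-1) ^ (d + 1) * completeHomogeneous z ((n : ℤ) - d) * ∏ m, z m := by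
  classical
  by_cases h0 : ∃ i, z i = 0
  · obtain ⟨i0, hi0⟩ := h0
    rw [Finset.prod_eq_zero (Finset.mem_univ i0) hi0, mul_zero]
    apply Finset.sum_eq_zero
    intro ℓ _
    by_cases hl : ℓ = i0
    · subst hl; rw [hi0, zero_pow (by omega), zero_mul]
    · rw [Finset.prod_eq_zero (i := i0)
        (Finset.mem_erase.mpr ⟨fun h => hl h.symm, Finset.mem_univ i0⟩)
        (by rw [hi0, zero_mul]), mul_zero]
  · push_neg at h0
    have hinj : Set.InjOn z ↑(Finset.univ : Finset (Fin d)) := fun a _ b _ h => hz h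
    have hcardu : #(Finset.univ : Finset (Fin d)) = d := by
      rw [Finset.card_univ, Fintype.card_fin]
    set r : Fin d → F := fun i => z i ^ n with hr
    have eval0 : Polynomial.eval 0 (Lagrange.interpolate Finset.univ z r)
        = ∑ ℓ, z ℓ ^ n * ∏ m ∈ Finset.univ.erase ℓ, z m * (z m - z ℓ)⁻¹ := by
      rw [Lagrange.interpolate_apply, Polynomial.eval_finset_sum]
      refine Finset.sum_congr rfl fun ℓ _ => ?_
      rw [Polynomial.eval_mul, Polynomial.eval_C, Lagrange.basis, Polynomial.eval_prod]
      congr 1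
      refine Finset.prod_congr rfl fun m _ => ?_
      rw [Lagrange.basisDivisor, Polynomial.eval_mul, Polynomial.eval_C, Polynomial.eval_sub,
        Polynomial.eval_X, Polynomial.eval_C, zero_sub]
      have hne : z m - z ℓ = -(z ℓ - z m) := by ring
      rw [hne, inv_neg]
      ring
    by_cases hnd : n < d
    · -- small n : the interpolant is X^n itself
      have hdeg : (Polynomial.X ^ n : F[X]).degree < #(Finset.univ : Finset (Fin d)) := by
        rw [hcardu, Polynomial.degree_X_pow]
        exact_mod_cast hnd
      have hf : (Polynomial.X ^ n : F[X]) = Lagrange.interpolate Finset.univ z r :=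
        Lagrange.eq_interpolate_of_eval_eq _ hinj hdeg (fun i _ => by
          rw [Polynomial.eval_pow, Polynomial.eval_X])
      rw [← eval0, ← hf, Polynomial.eval_pow, Polynomial.eval_X, zero_pow (by omega : n ≠ 0)]
      rw [completeHomogeneous, if_pos (by omega : (n : ℤ) - d < 0)]
      ring
    · push_neg at hnd
      set N : ℕ := n - d with hN
      set g : F[X] := ∏ i, (1 - Polynomial.C (z i) * Polynomial.X) with hg
      set P : F[X] := ∏ i, (Polynomial.X - Polynomial.C (z i)) with hP
      set hT : F[X] := ∑ j ∈ Finset.range (N + 1), Polynomial.C (hh z j) * Polynomial.X ^ j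
        with hhT
      have hdg : g.natDegree ≤ d := by
        have h1 : ∀ i : Fin d, (1 - Polynomial.C (z i) * Polynomial.X : F[X]).natDegree ≤ 1 := by
          intro i
          refine le_trans (Polynomial.natDegree_sub_le _ _) ?_
          simp only [Polynomial.natDegree_one, max_le_iff]
          exact ⟨Nat.zero_le 1, le_trans (Polynomial.natDegree_C_mul_le _ _)
            Polynomial.natDegree_X_le⟩
        refine le_trans (Polynomial.natDegree_prod_le _ _) ?_
        calc ∑ i, (1 - Polynomial.C (z i) * Polynomial.X : F[X]).natDegree
            ≤ ∑ _i : Fin d, 1 := Finset.sum_le_sum (fun i _ => h1 i)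
          _ = d := by simp
      have hdT : hT.natDegree ≤ N := by
        refine le_trans (Polynomial.natDegree_sum_le _ _) ?_
        rw [Finset.fold_max_le]
        refine ⟨Nat.zero_le _, fun j hj => ?_⟩
        refine le_trans (Polynomial.natDegree_C_mul_le _ _) ?_
        rw [Polynomial.natDegree_X_pow]
        exact Nat.lt_succ_iff.mp (Finset.mem_range.mp hj)
      have hcoeffT : ∀ a ≤ N, hT.coeff a = hh z a := by
        intro a ha
        rw [hhT, Polynomial.finset_sum_coeff]
        simp only [Polynomial.coeff_C_mul, Polynomial.coeff_X_pow, mul_ite, mul_one, mul_zero]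
        rw [Finset.sum_ite_eq (Finset.range (N + 1)) a (fun j => hh z j)]
        rw [if_pos (Finset.mem_range.mpr (by omega))]
      have hgH : ∀ m ≤ N, (hT * g).coeff m = if m = 0 then 1 else 0 := by
        intro m hm
        calc (hT * g).coeff m
            = ∑ p ∈ Finset.HasAntidiagonal.antidiagonal m, hh z p.1 * g.coeff p.2 := by
              rw [Polynomial.coeff_mul]
              exact Finset.sum_congr rfl fun p hp => by
                rw [hcoeffT p.1 (le_trans (Finset.HasAntidiagonal.antidiagonal.fst_le hp) hm)]
          _ = PowerSeries.coeff m (PowerSeries.mk (hh z) * (g : PowerSeries F)) := by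
              rw [PowerSeries.coeff_mul]
              exact Finset.sum_congr rfl fun p _ => by
                rw [PowerSeries.coeff_mk, Polynomial.coeff_coe]
          _ = PowerSeries.coeff m 1 := by rw [mul_comm, coe_geom_prod_mul_mk_hh]
          _ = if m = 0 then 1 else 0 := by rw [PowerSeries.coeff_one]
      have hPdeg : P.natDegree = d := by
        rw [hP, Polynomial.natDegree_prod _ _ (fun i _ => Polynomial.X_sub_C_ne_zero (z i))]
        simp [Polynomial.natDegree_X_sub_C, hcardu]
      have hrev : P.reverse = g := by
        rw [hP, reverse_prod]
        exact Finset.prod_congr rfl fun i _ => reverse_X_sub_C (h0 i)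
      have hPg : Polynomial.reflect d g = P := by
        rw [← hrev, Polynomial.reverse, hPdeg, SLWaux.reflect_reflect]
      have hQP : Polynomial.reflect n (hT * g) = Polynomial.reflect N hT * P := by
        rw [show n = N + d by omega, Polynomial.reflect_mul hT g hdT hdg, hPg]
      set f : F[X] := Polynomial.X ^ n - Polynomial.reflect n (hT * g) with hf0
      have hdegf : f.degree < (d : ℕ) := by
        rw [Polynomial.degree_lt_iff_coeff_zero]
        intro m hm
        rw [hf0, Polynomial.coeff_sub, Polynomial.coeff_X_pow, Polynomial.coeff_reflect]
        by_cases hmn : m ≤ n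
        · rw [Polynomial.revAt_le hmn, hgH (n - m) (by omega)]
          split_ifs with h1 h2 h2
          · ring
          · exfalso; omega
          · exfalso; omega
          · ring
        · push_neg at hmn
          rw [Polynomial.revAt_eq_self_of_lt hmn,
            Polynomial.coeff_eq_zero_of_natDegree_lt
              (lt_of_le_of_lt (le_trans (Polynomial.natDegree_mul_le) (by omega)) hmn),
            if_neg (by omega : ¬ m = n), sub_zero]
      have hevalP : ∀ i, Polynomial.eval (z i) P = 0 := by
        intro i
        rw [hP, Polynomial.eval_prod]
        exact Finset.prod_eq_zero (Finset.mem_univ i) (by simp)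
      have hfi : f = Lagrange.interpolate Finset.univ z r := by
        refine Lagrange.eq_interpolate_of_eval_eq _ hinj (by rw [hcardu]; exact hdegf)
          (fun i _ => ?_)
        rw [hf0, Polynomial.eval_sub, Polynomial.eval_pow, Polynomial.eval_X, hQP,
          Polynomial.eval_mul, hevalP, mul_zero, sub_zero]
      have e1 : Polynomial.eval 0 (Polynomial.reflect N hT) = hh z N := by
        rw [← Polynomial.coeff_zero_eq_eval_zero, Polynomial.coeff_reflect,
          Polynomial.revAt_le (Nat.zero_le N), Nat.sub_zero, hcoeffT N le_rfl]
      have e2 : Polynomial.eval 0 P = (-1) ^ d * ∏ m, z m := by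
        rw [hP, Polynomial.eval_prod]
        simp only [Polynomial.eval_sub, Polynomial.eval_X, Polynomial.eval_C, zero_sub]
        calc ∏ i, -(z i) = ∏ i, ((-1) * z i) := by simp only [neg_one_mul]
          _ = (-1) ^ d * ∏ i, z i := by
              rw [Finset.prod_mul_distrib, Finset.prod_const, hcardu]
      have hch : completeHomogeneous z ((n : ℤ) - d) = hh z N := by
        rw [completeHomogeneous, if_neg (by omega : ¬ ((n : ℤ) - d < 0))]
        have ht : ((n : ℤ) - d).toNat = N := by omega
        rw [ht, hh]
      rw [← eval0, ← hfi, hf0, Polynomial.eval_sub, Polynomial.eval_pow, Polynomial.eval_X,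
        zero_pow (by omega : n ≠ 0), hQP, Polynomial.eval_mul, e1, e2, hch, pow_succ]
      ring
end

section
/- Let F be a field, let d ≥ 1, and let z : Fin d → F be pairwise distinct elements. Then for every integer n with 0 ≤ n ≤ d − 1, ∑_{ℓ ∈ Fin d} z_ℓ^n · ∏_{m ≠ ℓ} z_m · (z_m − z_ℓ)⁻¹ equals 1 if n = 0 and equals 0 if 1 ≤ n ≤ d − 1. -/
open Finset Polynomial

theorem sum_lagrange_weights_pow_lt
    {F : Type*} [Field F] {d : ℕ} (hd : 1 ≤ d) (z : Fin d → F)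
    (hz : Function.Injective z) (n : ℕ) (hn : n ≤ d - 1) :
    ∑ ℓ, z ℓ ^ n * ∏ m ∈ Finset.univ.erase ℓ, z m * (z m - z ℓ)⁻¹
      = if n = 0 then 1 else 0 := by
  have hnd : n < d := lt_of_le_of_lt hn (Nat.sub_lt hd one_pos)
  have hdeg : (X ^ n : F[X]).degree < (univ : Finset (Fin d)).card := by
    simpa [Polynomial.degree_X_pow] using (by exact_mod_cast hnd :
      ((n : WithBot ℕ) < (d : WithBot ℕ)))
  have h := Lagrange.eq_interpolate (v := z) (f := (X ^ n : F[X]))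
    (hz.injOn) hdeg
  have h0 := congrArg (Polynomial.eval (0 : F)) h
  rw [Lagrange.interpolate_apply, Polynomial.eval_finset_sum] at h0
  simp only [Polynomial.eval_pow, Polynomial.eval_X, Polynomial.eval_mul,
    Polynomial.eval_C, Lagrange.basis, Polynomial.eval_prod,
    Lagrange.basisDivisor, Polynomial.eval_mul, Polynomial.eval_C,
    Polynomial.eval_sub, Polynomial.eval_X, zero_pow_eq] at h0 ⊢
  rw [h0]
  congr 1
  funext ℓ
  congr 1
  refine Finset.prod_congr rfl fun m hm => ?_
  rw [zero_sub, ← neg_sub (z m), inv_neg, neg_mul_neg, mul_comm]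
end

section
/- Let F be a field, let a₁, s ∈ F with s ≠ 0, and consider the Weierstrass curve W : y² + a₁xy + sy = x³ over F (coefficients a₁, a₂ = 0, a₃ = s, a₄ = 0, a₆ = 0). Then (0,0) is a nonsingular point of W, and the corresponding point P of the group of nonsingular rational points of W satisfies P ≠ 0 and 3 • P = 0; i.e. P generates a subgroup isomorphic to ℤ/3ℤ. -/
open Classical in
theorem PSU3_model_three_torsion_point {F : Type*} [Field F] (a₁ s : F) (hs : s ≠ 0) :
    let W : WeierstrassCurve.Affine F := ⟨a₁, 0, s, 0, 0⟩
    ∃ h : W.Nonsingular 0 0,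
      WeierstrassCurve.Affine.Point.some _ _ h ≠ 0 ∧
        3 • WeierstrassCurve.Affine.Point.some _ _ h = 0 := by
  intro W
  have h : W.Nonsingular 0 0 := by
    rw [WeierstrassCurve.Affine.nonsingular_iff, WeierstrassCurve.Affine.equation_iff]
    constructor
    · ring
    · right
      show (0 : F) ≠ -0 - a₁ * 0 - s
      simpa using (neg_ne_zero.mpr hs).symm
  refine ⟨h, WeierstrassCurve.Affine.Point.some_ne_zero h, ?_⟩
  have hnegY : W.negY 0 0 = -s := by simp [WeierstrassCurve.Affine.negY, W]
  have hy : (0 : F) ≠ W.negY 0 0 := by rw [hnegY]; exact (neg_ne_zero.mpr hs).symm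
  have hslope : W.slope 0 0 0 0 = 0 := by
    rw [WeierstrassCurve.Affine.slope_of_Y_ne rfl hy, hnegY]
    show (3 * 0 ^ 2 + 2 * (0:F) * 0 + 0 - a₁ * 0) / (0 - -s) = 0
    simp
  have hx3 : W.addX 0 0 (W.slope 0 0 0 0) = 0 := by
    rw [hslope]
    show (0:F) ^ 2 + a₁ * 0 - 0 - 0 - 0 = 0
    ring
  have hy3 : W.addY 0 0 0 (W.slope 0 0 0 0) = W.negY 0 0 := by
    rw [hslope, hnegY]
    show -((0:F) * (0 ^ 2 + a₁ * 0 - 0 - 0 - 0 - 0) + 0) - a₁ * (0 ^ 2 + a₁ * 0 - 0 - 0 - 0) - s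
      = -s
    ring
  have h2 : (3 : ℕ) • WeierstrassCurve.Affine.Point.some _ _ h =
      WeierstrassCurve.Affine.Point.some _ _ h + WeierstrassCurve.Affine.Point.some _ _ h +
        WeierstrassCurve.Affine.Point.some _ _ h := by
    rw [succ_nsmul, two_nsmul]
  rw [h2, WeierstrassCurve.Affine.Point.add_of_Y_ne hy,
    WeierstrassCurve.Affine.Point.add_of_Y_eq hx3 hy3]
end
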